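/- For every k ≥ 1 the polynomial identity ℬ_k(t_1,…,t_k, t) = Σ_{j=1}^{k} ((t+1)j/k − 1) · t_j · ℬ_{k−j}(t_1,…,t_{k−j}, t) holds, with ℬ_0 = 1. -/

import Mathlib

open Finset

/-- The partial Bell polynomial `B_{r,s}(x_1,…,x_l)`, `l = r−s+1`:
`Σ_{k_1+⋯+k_l=s, k_1+2k_2+⋯+lk_l=r} (r!/(k_1!⋯k_l!)) (x_1/1!)^{k_1}⋯(x_l/l!)^{k_l}`. -/
noncomputable def partialBell (r s : ℕ) (x : ℕ → ℚ) : ℚ :=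
  ∑ k ∈ (Fintype.piFinset fun _ : Fin (r - s + 1) => Finset.range (r + 1)) |>.filter
      (fun k => (∑ j, k j) = s ∧ (∑ j, (j.1 + 1) * k j) = r),
    ((r.factorial : ℚ) / ∏ j, ((k j).factorial : ℚ)) *
      ∏ j, (x (j.1 + 1) / ((j.1 + 1).factorial : ℚ)) ^ k j

/-- `ℬ_k(x_1,…,x_k,t) = Σ_{l_1+2l_2+⋯+kl_k=k} (t(t−1)⋯(t−(l_1+⋯+l_k)+1)) ·
x_1^{l_1}⋯x_k^{l_k}/(l_1!⋯l_k!)`; `ℬ_0 = 1`. -/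
noncomputable def calB (k : ℕ) (x : ℕ → ℚ) (t : ℚ) : ℚ :=
  ∑ l ∈ (Fintype.piFinset fun _ : Fin k => Finset.range (k + 1)) |>.filter
      (fun l => (∑ j, (j.1 + 1) * l j) = k),
    (∏ m ∈ Finset.range (∑ j, l j), (t - (m : ℚ))) *
      ∏ j, x (j.1 + 1) ^ l j / ((l j).factorial : ℚ)

lemma pad_sum {M : Type*} [AddCommMonoid M] {k' k : ℕ} (h : k' ≤ k) (F : ℕ → ℕ → M)
    (hF : ∀ m, F m 0 = 0) (l : Fin k → ℕ) (hl : ∀ i : Fin k, k' ≤ i.1 → l i = 0) :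
    ∑ i : Fin k, F i.1 (l i) = ∑ i : Fin k', F i.1 (l (Fin.castLE h i)) := by
  have : ∑ i ∈ (univ : Finset (Fin k')).map (Fin.castLEEmb h), F i.1 (l i)
      = ∑ i : Fin k, F i.1 (l i) := by
    refine Finset.sum_subset (subset_univ _) (fun i _ hi => ?_)
    have hik : k' ≤ i.1 := by
      by_contra hc
      push_neg at hc
      exact hi (Finset.mem_map.2 ⟨⟨i.1, hc⟩, mem_univ _, Fin.ext rfl⟩)
    rw [hl i hik, hF]
  rw [← this, Finset.sum_map]
  rfl

lemma pad_prod {M : Type*} [CommMonoid M] {k' k : ℕ} (h : k' ≤ k) (F : ℕ → ℕ → M)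
    (hF : ∀ m, F m 0 = 1) (l : Fin k → ℕ) (hl : ∀ i : Fin k, k' ≤ i.1 → l i = 0) :
    ∏ i : Fin k, F i.1 (l i) = ∏ i : Fin k', F i.1 (l (Fin.castLE h i)) := by
  have : ∏ i ∈ (univ : Finset (Fin k')).map (Fin.castLEEmb h), F i.1 (l i)
      = ∏ i : Fin k, F i.1 (l i) := by
    refine Finset.prod_subset (subset_univ _) (fun i _ hi => ?_)
    have hik : k' ≤ i.1 := by
      by_contra hc
      push_neg at hc
      exact hi (Finset.mem_map.2 ⟨⟨i.1, hc⟩, mem_univ _, Fin.ext rfl⟩)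
    rw [hl i hik, hF]
  rw [← this, Finset.prod_map]
  rfl

lemma term_le {n : ℕ} {l : Fin n → ℕ} {k' : ℕ} (hw : (∑ j, (j.1 + 1) * l j) = k')
    (i : Fin n) : (i.1 + 1) * l i ≤ k' := by
  rw [← hw]
  exact Finset.single_le_sum (f := fun j : Fin n => (j.1 + 1) * l j)
    (fun _ _ => Nat.zero_le _) (mem_univ i)

lemma entry_zero {n : ℕ} {l : Fin n → ℕ} {k' : ℕ} (hw : (∑ j, (j.1 + 1) * l j) = k')
    {i : Fin n} (hi : k' ≤ i.1) : l i = 0 := by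
  have := term_le hw i
  by_contra hc
  have h1 : 1 ≤ l i := Nat.one_le_iff_ne_zero.2 hc
  have : i.1 + 1 ≤ (i.1 + 1) * l i := Nat.le_mul_of_pos_right _ h1
  omega

lemma calB_pad {k' k : ℕ} (h : k' ≤ k) (x : ℕ → ℚ) (t : ℚ) :
    calB k' x t =
      ∑ l ∈ (Fintype.piFinset fun _ : Fin k => Finset.range (k + 1)) |>.filter
          (fun l => (∑ j, (j.1 + 1) * l j) = k'),
        (∏ m ∈ Finset.range (∑ j, l j), (t - (m : ℚ))) *
          ∏ j, x (j.1 + 1) ^ l j / ((l j).factorial : ℚ) := by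
  unfold calB
  refine Finset.sum_nbij' (fun l' (i : Fin k) => if hi : i.1 < k' then l' ⟨i.1, hi⟩ else 0)
    (fun l (i : Fin k') => l (Fin.castLE h i)) ?_ ?_ ?_ ?_ ?_
  · intro l' hl'
    simp only [Finset.mem_filter, Fintype.mem_piFinset, Finset.mem_range] at hl' ⊢
    obtain ⟨hr, hw⟩ := hl'
    constructor
    · intro i
      split
      · exact lt_of_lt_of_le (hr _) (by omega)
      · omega
    · rw [pad_sum h (fun m c => (m + 1) * c) (fun m => by simp)
        _ (fun i hi => by simp [Nat.not_lt.2 hi])]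
      have h2 : ∀ i : Fin k', (i.1 + 1) *
          (if hi : (Fin.castLE h i).1 < k' then l' ⟨(Fin.castLE h i).1, hi⟩ else 0)
          = (i.1 + 1) * l' i := fun i => by simp [i.2]
      rw [Finset.sum_congr rfl fun i _ => h2 i]
      exact hw
  · intro l hl
    simp only [Finset.mem_filter, Fintype.mem_piFinset, Finset.mem_range] at hl ⊢
    obtain ⟨hr, hw⟩ := hl
    constructor
    · intro i
      have h1 := term_le hw (Fin.castLE h i)
      have h2 : l (Fin.castLE h i) ≤ ((Fin.castLE h i).1 + 1) * l (Fin.castLE h i) :=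
        Nat.le_mul_of_pos_left _ (Nat.succ_pos _)
      omega
    · rw [← pad_sum h (fun m c => (m + 1) * c) (fun m => by simp)
        _ (fun i hi => entry_zero hw hi), hw]
  · intro l' _
    funext i
    simp [i.2]
  · intro l hl
    simp only [Finset.mem_filter, Fintype.mem_piFinset, Finset.mem_range] at hl
    funext i
    show (if hi : i.1 < k' then l (Fin.castLE h ⟨i.1, hi⟩) else 0) = l i
    split
    · exact congrArg l (Fin.ext rfl)
    · next hi => exact (entry_zero hl.2 (Nat.not_lt.1 hi)).symm
  · intro l' hl'
    simp only [Finset.mem_filter, Fintype.mem_piFinset, Finset.mem_range] at hl'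
    have hzero : ∀ i : Fin k, k' ≤ i.1 →
        (if hi : i.1 < k' then l' ⟨i.1, hi⟩ else 0) = 0 := fun i hi => by
      simp [Nat.not_lt.2 hi]
    have hs : ∑ i : Fin k, (if hi : i.1 < k' then l' ⟨i.1, hi⟩ else 0) = ∑ i, l' i := by
      rw [pad_sum h (fun _ c => c) (fun _ => rfl) _ hzero]
      exact Finset.sum_congr rfl fun i _ => by simp [i.2]
    have hp : ∏ i : Fin k,
        (x (i.1 + 1) ^ (if hi : i.1 < k' then l' ⟨i.1, hi⟩ else 0) /
          (((if hi : i.1 < k' then l' ⟨i.1, hi⟩ else 0)).factorial : ℚ))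
        = ∏ i : Fin k', x (i.1 + 1) ^ l' i / ((l' i).factorial : ℚ) := by
      rw [pad_prod h (fun m c => x (m + 1) ^ c / (c.factorial : ℚ)) (fun m => by simp) _ hzero]
      exact Finset.prod_congr rfl fun i _ => by simp [i.2]
    show _ * _ = _ * _
    rw [hs, hp]

lemma calB_shift {k j : ℕ} (hk : 1 ≤ k) (hj1 : 1 ≤ j) (hj2 : j ≤ k) (x : ℕ → ℚ) (t : ℚ) :
    x j * calB (k - j) x t =
      ∑ l ∈ (Fintype.piFinset fun _ : Fin k => Finset.range (k + 1)) |>.filter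
          (fun l => (∑ i, (i.1 + 1) * l i) = k),
        (∑ i : Fin k, if i.1 + 1 = j then (l i : ℚ) else 0) *
          ((∏ m ∈ Finset.range ((∑ i, l i) - 1), (t - (m : ℚ))) *
            ∏ i, x (i.1 + 1) ^ l i / ((l i).factorial : ℚ)) := by
  have hjk : j - 1 < k := by omega
  set jidx : Fin k := ⟨j - 1, hjk⟩ with hjidx
  have hj : jidx.1 + 1 = j := by simp only [hjidx]; omega
  have hcol : ∀ l : Fin k → ℕ,
      (∑ i : Fin k, if i.1 + 1 = j then (l i : ℚ) else 0) = (l jidx : ℚ) := by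
    intro l
    rw [Finset.sum_eq_single jidx (fun b _ hb => if_neg (fun hc => hb (Fin.ext (by
      show b.1 = j - 1; omega)))) (fun h => absurd (mem_univ _) h), if_pos hj]
  have hΦw : ∀ m : Fin k → ℕ,
      (∑ i : Fin k, (i.1 + 1) * (m i + if i = jidx then 1 else 0))
        = (∑ i, (i.1 + 1) * m i) + j := by
    intro m
    simp only [mul_add, Finset.sum_add_distrib, mul_ite, mul_one, mul_zero]
    rw [Finset.sum_ite_eq' univ jidx (fun i : Fin k => i.1 + 1), if_pos (mem_univ _), hj]
  have hΦn : ∀ m : Fin k → ℕ,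
      (∑ i : Fin k, (m i + if i = jidx then 1 else 0)) = (∑ i, m i) + 1 := by
    intro m
    rw [Finset.sum_add_distrib, Finset.sum_ite_eq' univ jidx (fun _ : Fin k => 1),
      if_pos (mem_univ _)]
  have hΦΨ : ∀ l : Fin k → ℕ, 1 ≤ l jidx → ∀ i : Fin k,
      ((l i - if i = jidx then 1 else 0) + if i = jidx then 1 else 0) = l i := by
    intro l hl i
    by_cases hi : i = jidx
    · simp only [if_pos hi]; subst hi; omega
    · simp [hi]
  rw [calB_pad (Nat.sub_le k j) x t, Finset.mul_sum]
  conv_rhs => rw [← Finset.sum_filter_of_ne (p := fun l : Fin k → ℕ => 1 ≤ l jidx)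
    (fun l _ hne => by
      by_contra hc
      push_neg at hc
      apply hne
      rw [hcol l]
      have : l jidx = 0 := by omega
      simp [this])]
  refine Finset.sum_nbij' (fun l' (i : Fin k) => l' i + if i = jidx then 1 else 0)
    (fun l (i : Fin k) => l i - if i = jidx then 1 else 0) ?_ ?_ ?_ ?_ ?_
  · intro l' hl'
    simp only [Finset.mem_filter, Fintype.mem_piFinset, Finset.mem_range] at hl' ⊢
    obtain ⟨hr, hw⟩ := hl'
    refine ⟨⟨fun i => ?_, by rw [hΦw l', hw]; omega⟩, by simp⟩
    have h1 := term_le hw i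
    have h2 : l' i ≤ (i.1 + 1) * l' i := Nat.le_mul_of_pos_left _ (Nat.succ_pos _)
    by_cases hi : i = jidx
    · simp only [if_pos hi]
      omega
    · simp only [if_neg hi]
      omega
  · intro l hl
    simp only [Finset.mem_filter, Fintype.mem_piFinset, Finset.mem_range] at hl ⊢
    obtain ⟨⟨hr, hw⟩, hpos⟩ := hl
    constructor
    · intro i
      have := hr i
      omega
    · have h2 := hΦw (fun i => l i - if i = jidx then 1 else 0)
      have h3 : (∑ i : Fin k, (i.1 + 1) *
          ((l i - if i = jidx then 1 else 0) + if i = jidx then 1 else 0))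
          = ∑ i : Fin k, (i.1 + 1) * l i :=
        Finset.sum_congr rfl fun i _ => by rw [hΦΨ l hpos i]
      omega
  · intro l' _
    funext i
    show (l' i + if i = jidx then 1 else 0) - (if i = jidx then 1 else 0) = l' i
    by_cases hi : i = jidx <;> simp [hi]
  · intro l hl
    simp only [Finset.mem_filter, Fintype.mem_piFinset, Finset.mem_range] at hl
    funext i
    exact hΦΨ l hl.2 i
  · intro l' hl'
    simp only [Finset.mem_filter, Fintype.mem_piFinset, Finset.mem_range] at hl'
    obtain ⟨hr, hw⟩ := hl'
    show x j * (_ * _) = (∑ i : Fin k, if i.1 + 1 = j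
        then ((l' i + if i = jidx then 1 else 0 : ℕ) : ℚ) else 0) * (_ * _)
    rw [hcol]
    have e1 : (∑ i : Fin k, (l' i + if i = jidx then 1 else 0)) - 1 = ∑ i, l' i := by
      rw [hΦn]
      omega
    have e2 : (l' jidx + if jidx = jidx then 1 else 0) = l' jidx + 1 := by simp
    have e3 : ∏ i : Fin k, x (i.1 + 1) ^ (l' i + if i = jidx then 1 else 0) /
          (((l' i + if i = jidx then 1 else 0)).factorial : ℚ)
        = (x (jidx.1 + 1) ^ (l' jidx + 1) / (((l' jidx + 1).factorial : ℚ))) *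
          ∏ i ∈ univ.erase jidx, x (i.1 + 1) ^ l' i / ((l' i).factorial : ℚ) := by
      rw [← Finset.mul_prod_erase univ _ (mem_univ jidx)]
      congr 1
      · rw [e2]
      · exact Finset.prod_congr rfl fun i hi => by simp [(Finset.mem_erase.1 hi).1]
    have e4 : ∏ i : Fin k, x (i.1 + 1) ^ l' i / ((l' i).factorial : ℚ)
        = (x (jidx.1 + 1) ^ (l' jidx) / ((l' jidx).factorial : ℚ)) *
          ∏ i ∈ univ.erase jidx, x (i.1 + 1) ^ l' i / ((l' i).factorial : ℚ) :=
      (Finset.mul_prod_erase _ _ (mem_univ jidx)).symm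
    rw [e1, e2, e3, e4, hj]
    have hfac : (((l' jidx + 1).factorial : ℚ)) = (l' jidx + 1) * ((l' jidx).factorial : ℚ) := by
      rw [Nat.factorial_succ]
      push_cast
      ring
    have hne : ((l' jidx).factorial : ℚ) ≠ 0 := Nat.cast_ne_zero.2 (Nat.factorial_ne_zero _)
    have hne2 : ((l' jidx : ℚ) + 1) ≠ 0 := by positivity
    rw [hfac, pow_succ]
    push_cast
    field_simp

/-- For `k ≥ 1`:
`ℬ_k(x_1,…,x_k,t) = Σ_{j=1}^{k} ((t+1)j/k − 1)·x_j·ℬ_{k−j}(x_1,…,x_{k−j},t)`. -/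
theorem stmt11 (k : ℕ) (hk : 1 ≤ k) (x : ℕ → ℚ) (t : ℚ) :
    calB k x t =
      ∑ j ∈ Finset.Icc 1 k, ((t + 1) * (j : ℚ) / (k : ℚ) - 1) * x j * calB (k - j) x t := by
  have hk0 : (k : ℚ) ≠ 0 := Nat.cast_ne_zero.2 (by omega)
  have step : ∀ j ∈ Finset.Icc 1 k,
      ((t + 1) * (j : ℚ) / (k : ℚ) - 1) * x j * calB (k - j) x t
        = ∑ l ∈ (Fintype.piFinset fun _ : Fin k => Finset.range (k + 1)) |>.filter
            (fun l => (∑ i, (i.1 + 1) * l i) = k),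
          ((t + 1) * (j : ℚ) / (k : ℚ) - 1) *
            ((∑ i : Fin k, if i.1 + 1 = j then (l i : ℚ) else 0) *
              ((∏ m ∈ Finset.range ((∑ i, l i) - 1), (t - (m : ℚ))) *
                ∏ i, x (i.1 + 1) ^ l i / ((l i).factorial : ℚ))) := by
    intro j hj
    rw [Finset.mem_Icc] at hj
    rw [mul_assoc, calB_shift hk hj.1 hj.2 x t, Finset.mul_sum]
  rw [Finset.sum_congr rfl step, Finset.sum_comm]
  unfold calB
  refine Finset.sum_congr rfl fun l hl => ?_
  simp only [Finset.mem_filter, Fintype.mem_piFinset, Finset.mem_range] at hl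
  obtain ⟨hr, hw⟩ := hl
  have hassoc : ∀ j ∈ Finset.Icc 1 k,
      ((t + 1) * (j : ℚ) / (k : ℚ) - 1) *
        ((∑ i : Fin k, if i.1 + 1 = j then (l i : ℚ) else 0) *
          ((∏ m ∈ Finset.range ((∑ i, l i) - 1), (t - (m : ℚ))) *
            ∏ i, x (i.1 + 1) ^ l i / ((l i).factorial : ℚ)))
      = (((t + 1) * (j : ℚ) / (k : ℚ) - 1) *
          (∑ i : Fin k, if i.1 + 1 = j then (l i : ℚ) else 0)) *
        ((∏ m ∈ Finset.range ((∑ i, l i) - 1), (t - (m : ℚ))) *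
          ∏ i, x (i.1 + 1) ^ l i / ((l i).factorial : ℚ)) := fun j _ => by ring
  rw [Finset.sum_congr rfl hassoc, ← Finset.sum_mul]
  have hkey : (∑ j ∈ Finset.Icc 1 k, ((t + 1) * (j : ℚ) / (k : ℚ) - 1) *
      (∑ i : Fin k, if i.1 + 1 = j then (l i : ℚ) else 0))
      = t + 1 - (∑ i, l i : ℕ) := by
    have swap : (∑ j ∈ Finset.Icc 1 k, ((t + 1) * (j : ℚ) / (k : ℚ) - 1) *
        (∑ i : Fin k, if i.1 + 1 = j then (l i : ℚ) else 0))
        = ∑ i : Fin k, ∑ j ∈ Finset.Icc 1 k,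
          (if i.1 + 1 = j then ((t + 1) * (j : ℚ) / (k : ℚ) - 1) * (l i : ℚ) else 0) := by
      rw [Finset.sum_comm]
      refine Finset.sum_congr rfl fun j _ => ?_
      rw [Finset.mul_sum]
      exact Finset.sum_congr rfl fun i _ => by
        by_cases hij : i.1 + 1 = j <;> simp [hij]
    rw [swap]
    have collapse : ∀ i : Fin k, (∑ j ∈ Finset.Icc 1 k,
        (if i.1 + 1 = j then ((t + 1) * (j : ℚ) / (k : ℚ) - 1) * (l i : ℚ) else 0))
        = ((t + 1) * ((i.1 : ℚ) + 1) / (k : ℚ) - 1) * (l i : ℚ) := by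
      intro i
      rw [Finset.sum_ite_eq (Finset.Icc 1 k) (i.1 + 1)
        (fun j => ((t + 1) * (j : ℚ) / (k : ℚ) - 1) * (l i : ℚ)),
        if_pos (Finset.mem_Icc.2 ⟨by omega, i.2⟩)]
      push_cast
      ring
    rw [Finset.sum_congr rfl fun i _ => collapse i]
    have hcast : (∑ i : Fin k, ((i.1 : ℚ) + 1) * (l i : ℚ)) = (k : ℚ) := by
      rw [show ((k : ℚ)) = ((∑ i : Fin k, (i.1 + 1) * l i : ℕ) : ℚ) by rw [hw]]
      push_cast
      rfl
    have expand : (∑ i : Fin k, ((t + 1) * ((i.1 : ℚ) + 1) / (k : ℚ) - 1) * (l i : ℚ))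
        = (t + 1) / (k : ℚ) * (∑ i : Fin k, ((i.1 : ℚ) + 1) * (l i : ℚ))
          - ∑ i : Fin k, (l i : ℚ) := by
      rw [Finset.mul_sum, ← Finset.sum_sub_distrib]
      exact Finset.sum_congr rfl fun i _ => by ring
    rw [expand, hcast]
    push_cast
    field_simp
  rw [hkey]
  have hn1 : 1 ≤ ∑ i, l i := by
    by_contra hc
    push_neg at hc
    have hz : ∀ i : Fin k, l i = 0 := by
      intro i
      have : ∑ i, l i = 0 := by omega
      exact (Finset.sum_eq_zero_iff).1 this i (mem_univ i)
    rw [Finset.sum_eq_zero (fun i _ => by rw [hz i, mul_zero])] at hw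
    omega
  obtain ⟨m, hm⟩ : ∃ m, ∑ i, l i = m + 1 := ⟨(∑ i, l i) - 1, by omega⟩
  rw [hm, Finset.prod_range_succ]
  have : (t + 1 - ((m + 1 : ℕ) : ℚ)) = t - (m : ℚ) := by push_cast; ring
  rw [this, Nat.add_sub_cancel]
  ring
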